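/- Any affine map sending the vertices of a finite simplicial complex L of dimension m to points in general position in ℝ^{2m+1} (e.g., distinct points on the moment curve t ↦ (t, t², …, t^{2m+1})) restricts to an injective map on the geometric realization |L|. -/
import Mathlib


open scoped BigOperators

noncomputable section

variable {V : Type*} [Fintype V] [DecidableEq V]

def IsComplex (K : Finset (Finset V)) : Prop :=
  ∅ ∈ K ∧ (∀ v : V, {v} ∈ K) ∧ ∀ F ∈ K, ∀ G ⊆ F, G ∈ K

def facets (K : Finset (Finset V)) : Finset (Finset V) :=
  K.filter fun J => ∀ J' ∈ K, J ⊆ J' → J = J'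

def contV (K : Finset (Finset V)) (i : V) : Finset (Finset V) :=
  (facets K).filter fun J => i ∈ J

def dual (K : Finset (Finset V)) : Finset (Finset (Finset V)) :=
  (facets K).powerset.filter fun α => (α.inf id).Nonempty

def geomFace {W : Type*} [Fintype W] (F : Finset W) : Set (W → ℝ) :=
  {x | (∀ w, 0 ≤ x w) ∧ (∑ w, x w) = 1 ∧ ∀ w, x w ≠ 0 → w ∈ F}

def geom {W : Type*} [Fintype W] (L : Finset (Finset W)) : Set (W → ℝ) :=
  ⋃ F ∈ L, geomFace F

def supp {W : Type*} [Fintype W] [DecidableEq W] (x : W → ℝ) : Finset W :=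
  Finset.univ.filter fun w => x w ≠ 0

def Faithful {d : ℕ} (K : Finset (Finset V))
    (f : (Finset V → ℝ) → EuclideanSpace ℝ (Fin d)) : Prop :=
  ∀ I : Finset V, (⋂ i ∈ I, f '' geomFace (contV K i)).Nonempty → I ∈ K

def affExt {W : Type*} [Fintype W] {E : Type*} [AddCommGroup E] [Module ℝ E]
    (p : W → E) (x : W → ℝ) : E := ∑ w, x w • p w

def Hhat (K : Finset (Finset V)) : Set ((Finset V → ℝ) × (Finset V → ℝ)) :=
  {z | z.1 ∈ geom (dual K) ∧ z.2 ∈ geom (dual K) ∧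
    ((supp z.1).inf id ∪ (supp z.2).inf id) ∉ K}

def Matousek (d : ℕ) (K : Finset (Finset V)) : Prop :=
  ∃ g : Hhat K → EuclideanSpace ℝ (Fin d),
    Continuous g ∧ (∀ z, ‖g z‖ = 1) ∧
    ∀ (x y : Finset V → ℝ) (hxy : (x, y) ∈ Hhat K) (hyx : (y, x) ∈ Hhat K),
      g ⟨(y, x), hyx⟩ = - g ⟨(x, y), hxy⟩

def Representable (d : ℕ) (K : Finset (Finset V)) : Prop :=
  ∃ C : V → Set (EuclideanSpace ℝ (Fin d)),
    (∀ i, Convex ℝ (C i)) ∧ ∀ I : Finset V, I ∈ K ↔ (⋂ i ∈ I, C i).Nonempty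

def dimOf {W : Type*} [Fintype W] [DecidableEq W] (L : Finset (Finset W)) : ℕ :=
  (L.sup Finset.card) - 1

/-- an affine map sending the vertices of an `m`-dimensional
complex to points in general position in `ℝ^{2m+1}` is injective on `|L|`. -/
theorem stmt13 {W : Type*} [Fintype W] [DecidableEq W] {m : ℕ}
    (L : Finset (Finset W)) (hdim : ∀ F ∈ L, F.card ≤ m + 1)
    (p : W → EuclideanSpace ℝ (Fin (2 * m + 1)))
    (hgp : ∀ S : Finset W, S.card ≤ 2 * m + 2 →
      AffineIndependent ℝ (fun s : S => p s)) :
    Set.InjOn (affExt p) (geom L) := by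
  rintro x hx y hy hf
  simp only [geom, Set.mem_iUnion] at hx hy
  obtain ⟨F, hF, hx0, hx1, hxs⟩ := hx
  obtain ⟨G, hG, hy0, hy1, hys⟩ := hy
  set S := F ∪ G with hS
  have hcard : S.card ≤ 2 * m + 2 := by
    calc S.card ≤ F.card + G.card := Finset.card_union_le F G
    _ ≤ (m + 1) + (m + 1) := add_le_add (hdim F hF) (hdim G hG)
    _ = 2 * m + 2 := by ring
  have hai := hgp S hcard
  rw [affineIndependent_iff] at hai
  have hxout : ∀ w ∉ S, x w = 0 := by
    intro w hw
    by_contra h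
    exact hw (Finset.mem_union_left _ (hxs w h))
  have hyout : ∀ w ∉ S, y w = 0 := by
    intro w hw
    by_contra h
    exact hw (Finset.mem_union_right _ (hys w h))
  have hsx : ∑ s ∈ S, x s = 1 := by
    rw [← hx1]
    exact Finset.sum_subset (Finset.subset_univ S) (fun w _ hw => hxout w hw)
  have hsy : ∑ s ∈ S, y s = 1 := by
    rw [← hy1]
    exact Finset.sum_subset (Finset.subset_univ S) (fun w _ hw => hyout w hw)
  have hsum : ∑ s : S, (x s - y s) = 0 := by
    rw [Finset.sum_sub_distrib, Finset.sum_coe_sort S x, Finset.sum_coe_sort S y,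
      hsx, hsy, sub_self]
  have hws : ∑ s : S, (x s - y s) • p s = 0 := by
    have hx' : ∑ s ∈ S, x s • p s = ∑ w, x w • p w :=
      Finset.sum_subset (Finset.subset_univ S)
        (fun w _ hw => by rw [hxout w hw, zero_smul])
    have hy' : ∑ s ∈ S, y s • p s = ∑ w, y w • p w :=
      Finset.sum_subset (Finset.subset_univ S)
        (fun w _ hw => by rw [hyout w hw, zero_smul])
    have : ∑ s : S, (x s - y s) • p (s : W)
        = ∑ s ∈ S, x s • p s - ∑ s ∈ S, y s • p s := by
      rw [Finset.sum_coe_sort S (fun w => (x w - y w) • p w)]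
      simp [sub_smul, Finset.sum_sub_distrib]
    rw [this, hx', hy']
    have := hf
    simp only [affExt] at this
    rw [this, sub_self]
  have hz := hai Finset.univ (fun s => x s - y s) hsum hws
  funext w
  by_cases hw : w ∈ S
  · exact sub_eq_zero.mp (hz ⟨w, hw⟩ (Finset.mem_univ _))
  · rw [hxout w hw, hyout w hw]
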